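/- Let |Φ₀ⁿ⟩ = 2^(-(n-1)/2)[ Σ_{Δ(y)≡0 mod 4} |y⟩ − Σ_{Δ(y)≡2 mod 4} |y⟩ ] and |Φ₁ⁿ⟩ = 2^(-(n-1)/2)[ Σ_{Δ(y)≡1 mod 4} |y⟩ − Σ_{Δ(y)≡3 mod 4} |y⟩ ], where Δ(y) is the Hamming weight of y ∈ {0,1}ⁿ and sums run over even-weight (resp. odd-weight) strings. Then for any 1 ≤ k < n: |Φ₀ⁿ⟩ = (1/√2)[ |Φ₀ᵏ⟩ ⊗ |Φ₀^{n−k}⟩ − |Φ₁ᵏ⟩ ⊗ |Φ₁^{n−k}⟩ ]. -/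
import Mathlib


/-- Hamming weight of a bit string. -/
def hammingWeight {n : ℕ} (y : Fin n → Bool) : ℕ :=
  (Finset.univ.filter (fun i => y i = true)).card

/-- Normalization constant `2^(-(n-1)/2) = (√2)^{-(n-1)}`. -/
noncomputable def ampl (n : ℕ) : ℂ := (((Real.sqrt 2 : ℝ) : ℂ) ^ (n - 1))⁻¹

/-- The state `|Φ₀ⁿ⟩ = 2^(-(n-1)/2)[ Σ_{Δ(y)≡0 (4)} |y⟩ − Σ_{Δ(y)≡2 (4)} |y⟩ ]`. -/
noncomputable def Phi0 (n : ℕ) : (Fin n → Bool) → ℂ := fun y =>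
  if hammingWeight y % 4 = 0 then ampl n
  else if hammingWeight y % 4 = 2 then -ampl n else 0

/-- The state `|Φ₁ⁿ⟩ = 2^(-(n-1)/2)[ Σ_{Δ(y)≡1 (4)} |y⟩ − Σ_{Δ(y)≡3 (4)} |y⟩ ]`. -/
noncomputable def Phi1 (n : ℕ) : (Fin n → Bool) → ℂ := fun y =>
  if hammingWeight y % 4 = 1 then ampl n
  else if hammingWeight y % 4 = 3 then -ampl n else 0

lemma hw_append {k m : ℕ} (y : Fin k → Bool) (z : Fin m → Bool) :
    hammingWeight (Fin.append y z) = hammingWeight y + hammingWeight z := by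
  have : ∀ {n : ℕ} (w : Fin n → Bool), hammingWeight w = ∑ i, if w i then 1 else 0 := by
    intro n w
    unfold hammingWeight
    rw [Finset.card_filter]
  rw [this, this, this, Fin.sum_univ_add]
  simp [Fin.append_left, Fin.append_right]

lemma ampl_add {k m : ℕ} (hk : 1 ≤ k) (hm : 1 ≤ m) :
    ampl (k + m) = ((Real.sqrt 2 : ℝ) : ℂ)⁻¹ * (ampl k * ampl m) := by
  unfold ampl
  rw [show k + m - 1 = 1 + ((k - 1) + (m - 1)) by omega, pow_add, pow_one, pow_add,
    mul_inv, mul_inv]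

/-- Decomposition identity: `|Φ₀^{k+m}⟩ = (1/√2)[ |Φ₀ᵏ⟩⊗|Φ₀ᵐ⟩ − |Φ₁ᵏ⟩⊗|Φ₁ᵐ⟩ ]`,
expressed amplitude-wise on the concatenation of bit strings. -/
theorem stmt18 (k m : ℕ) (hk : 1 ≤ k) (hm : 1 ≤ m)
    (y : Fin k → Bool) (z : Fin m → Bool) :
    Phi0 (k + m) (Fin.append y z) =
      ((Real.sqrt 2 : ℝ) : ℂ)⁻¹ * (Phi0 k y * Phi0 m z - Phi1 k y * Phi1 m z) := by
  have h := hw_append y z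
  have ha := ampl_add hk hm
  unfold Phi0 Phi1
  rw [h]
  have h4 : (hammingWeight y + hammingWeight z) % 4
      = (hammingWeight y % 4 + hammingWeight z % 4) % 4 := by omega
  rw [h4]
  have hy : hammingWeight y % 4 = 0 ∨ hammingWeight y % 4 = 1 ∨
      hammingWeight y % 4 = 2 ∨ hammingWeight y % 4 = 3 := by omega
  have hz : hammingWeight z % 4 = 0 ∨ hammingWeight z % 4 = 1 ∨
      hammingWeight z % 4 = 2 ∨ hammingWeight z % 4 = 3 := by omega
  rcases hy with h1|h1|h1|h1 <;> rcases hz with h2|h2|h2|h2 <;>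
    simp [h1, h2, ha]
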